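/- Let a ≥ 2 be an integer and let Φ = (1 + √5)/2 be the golden ratio. Then for every natural number k, the number of Fibonacci numbers lying in the interval [a^k, a^(k+1)) is either ⌊(log a)/(log Φ)⌋ or ⌈(log a)/(log Φ)⌉. -/

import Mathlib

open Real goldenRatio

noncomputable def Phi : ℝ := (1 + Real.sqrt 5) / 2

private lemma phi_eq : Phi = φ := rfl

private lemma fib_split (m j : ℕ) :
    (Nat.fib (m + j) : ℝ) = φ ^ j * Nat.fib m + ψ ^ m * Nat.fib j := by
  have h5 : Real.sqrt 5 ≠ 0 := by positivity
  rw [Real.coe_fib_eq, Real.coe_fib_eq, Real.coe_fib_eq]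
  field_simp
  ring

private lemma gold_pow_rec (n : ℕ) : φ ^ (n + 2) = φ ^ (n + 1) + φ ^ n := by
  have h := goldenRatio_sq
  calc φ ^ (n + 2) = φ ^ n * φ ^ 2 := by ring
    _ = φ ^ n * (φ + 1) := by rw [h]
    _ = φ ^ (n + 1) + φ ^ n := by ring

private lemma fib_le_gold_pow : ∀ n : ℕ, (Nat.fib (n + 1) : ℝ) ≤ φ ^ n := by
  intro n
  induction n using Nat.twoStepInduction with
  | zero => simp
  | one => simpa using one_lt_goldenRatio.le
  | more n ih1 ih2 =>
    have hf : Nat.fib (n + 2 + 1) = Nat.fib (n + 1) + Nat.fib (n + 1 + 1) := Nat.fib_add_two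
    rw [hf]
    push_cast
    have := gold_pow_rec n
    linarith

private lemma gold_pow_le_fib : ∀ n : ℕ, φ ^ n ≤ (Nat.fib (n + 2) : ℝ) := by
  intro n
  induction n using Nat.twoStepInduction with
  | zero => simp
  | one => norm_num [Nat.fib]; exact goldenRatio_lt_two.le
  | more n ih1 ih2 =>
    have hf : Nat.fib (n + 2 + 2) = Nat.fib (n + 2) + Nat.fib (n + 2 + 1) := Nat.fib_add_two
    rw [hf]
    push_cast
    have := gold_pow_rec n
    linarith

private lemma fib_lt_gold_pow : ∀ n : ℕ, (Nat.fib (n + 2) : ℝ) < φ ^ (n + 1) := by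
  intro n
  induction n with
  | zero => simpa using one_lt_goldenRatio
  | succ n ih =>
    have hf : Nat.fib (n + 1 + 2) = Nat.fib (n + 1) + Nat.fib (n + 2) := Nat.fib_add_two
    rw [hf]
    push_cast
    have h1 := fib_le_gold_pow n
    have := gold_pow_rec n
    linarith

private lemma abs_goldConj : |ψ| = φ⁻¹ := by
  rw [abs_of_neg goldenConj_neg, ← inv_goldenRatio]

private lemma fib_ge_exists (x : ℕ) : ∃ n, x ≤ Nat.fib n := by
  refine ⟨x + 2, ?_⟩
  have h1 := Nat.le_fib_add_one x
  have h2 : 0 < Nat.fib (x + 1) := Nat.fib_pos.mpr (by omega)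
  have h3 : Nat.fib (x + 2) = Nat.fib x + Nat.fib (x + 1) := Nat.fib_add_two
  omega

private lemma key (A B : ℕ) (hA : 2 ≤ A) (hAB : A ≤ B) :
    ∃ m c : ℕ, 2 ≤ m ∧
      (Set.range Nat.fib ∩ Set.Ico A B).ncard = c ∧
      Nat.fib m < A ∧ A ≤ Nat.fib (m + 1) ∧
      Nat.fib (m + c) < B ∧ B ≤ Nat.fib (m + c + 1) := by
  classical
  set N := Nat.find (fib_ge_exists B) with hN
  have hNspec : B ≤ Nat.fib N := Nat.find_spec (fib_ge_exists B)
  have hNmin : ∀ j, j < N → Nat.fib j < B := fun j hj =>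
    lt_of_not_ge (Nat.find_min (fib_ge_exists B) hj)
  set M := Nat.find (fib_ge_exists A) with hM
  have hMspec : A ≤ Nat.fib M := Nat.find_spec (fib_ge_exists A)
  have hMmin : ∀ j, j < M → Nat.fib j < A := fun j hj =>
    lt_of_not_ge (Nat.find_min (fib_ge_exists A) hj)
  have hM3 : 3 ≤ M := by
    by_contra h
    push_neg at h
    have : Nat.fib M ≤ 1 := by interval_cases M <;> simp [Nat.fib]
    omega
  have hMN : M ≤ N := by
    by_contra h
    push_neg at h
    have := hMmin N h
    omega
  have hN1 : 1 ≤ N := by omega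
  refine ⟨M - 1, N - M, by omega, ?_, hMmin (M - 1) (by omega), ?_, ?_, ?_⟩
  · -- cardinality
    have hset : Set.range Nat.fib ∩ Set.Ico A B = Nat.fib '' Set.Icc M (N - 1) := by
      ext x
      constructor
      · rintro ⟨⟨n, rfl⟩, hx1, hx2⟩
        refine ⟨n, ⟨?_, ?_⟩, rfl⟩
        · by_contra h
          push_neg at h
          have := Nat.fib_mono (show n ≤ M - 1 by omega)
          have := hMmin (M - 1) (by omega)
          omega
        · by_contra h
          push_neg at h
          have := Nat.fib_mono (show N ≤ n by omega)
          omega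
      · rintro ⟨n, ⟨hn1, hn2⟩, rfl⟩
        refine ⟨⟨n, rfl⟩, le_trans hMspec (Nat.fib_mono hn1), ?_⟩
        exact lt_of_le_of_lt (Nat.fib_mono hn2) (hNmin (N - 1) (by omega))
    rw [hset]
    have hinj : Set.InjOn Nat.fib (Set.Icc M (N - 1)) := by
      intro x hx y hy hxy
      obtain ⟨hx1, _⟩ := hx
      obtain ⟨hy1, _⟩ := hy
      have ex : x = x - 2 + 2 := by omega
      have ey : y = y - 2 + 2 := by omega
      have hxy' : Nat.fib (x - 2 + 2) = Nat.fib (y - 2 + 2) := by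
        rw [← ex, ← ey]; exact hxy
      have := Nat.fib_add_two_strictMono.injective hxy'
      omega
    rw [Set.ncard_image_of_injOn hinj, ← Finset.coe_Icc, Set.ncard_coe_finset, Nat.card_Icc]
    omega
  · have e : M - 1 + 1 = M := by omega
    rw [e]; exact hMspec
  · have e : M - 1 + (N - M) = N - 1 := by omega
    rw [e]; exact hNmin (N - 1) (by omega)
  · have e : M - 1 + (N - M) + 1 = N := by omega
    rw [e]; exact hNspec

private lemma key0 (B : ℕ) (hB : 2 ≤ B) :
    ∃ c : ℕ, (Set.range Nat.fib ∩ Set.Ico 1 B).ncard = c ∧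
      Nat.fib (c + 1) < B ∧ B ≤ Nat.fib (c + 2) := by
  classical
  set N := Nat.find (fib_ge_exists B) with hN
  have hNspec : B ≤ Nat.fib N := Nat.find_spec (fib_ge_exists B)
  have hNmin : ∀ j, j < N → Nat.fib j < B := fun j hj =>
    lt_of_not_ge (Nat.find_min (fib_ge_exists B) hj)
  have hN3 : 3 ≤ N := by
    by_contra h
    push_neg at h
    have : Nat.fib N ≤ 1 := by interval_cases N <;> simp [Nat.fib]
    omega
  refine ⟨N - 2, ?_, ?_, ?_⟩
  · have hset : Set.range Nat.fib ∩ Set.Ico 1 B = Nat.fib '' Set.Icc 2 (N - 1) := by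
      ext x
      constructor
      · rintro ⟨⟨n, rfl⟩, hx1, hx2⟩
        rcases Nat.lt_or_ge n 2 with h | h
        · have hn1 : Nat.fib n = 1 := by interval_cases n <;> simp_all [Nat.fib]
          refine ⟨2, ⟨le_refl 2, by omega⟩, by rw [hn1]; rfl⟩
        · refine ⟨n, ⟨h, ?_⟩, rfl⟩
          by_contra hc
          push_neg at hc
          have := Nat.fib_mono (show N ≤ n by omega)
          omega
      · rintro ⟨n, ⟨hn1, hn2⟩, rfl⟩
        refine ⟨⟨n, rfl⟩, ?_, ?_⟩
        · have : 0 < Nat.fib n := Nat.fib_pos.mpr (by omega)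
          omega
        · exact lt_of_le_of_lt (Nat.fib_mono hn2) (hNmin (N - 1) (by omega))
    rw [hset]
    have hinj : Set.InjOn Nat.fib (Set.Icc 2 (N - 1)) := by
      intro x hx y hy hxy
      obtain ⟨hx1, _⟩ := hx
      obtain ⟨hy1, _⟩ := hy
      have ex : x = x - 2 + 2 := by omega
      have ey : y = y - 2 + 2 := by omega
      have hxy' : Nat.fib (x - 2 + 2) = Nat.fib (y - 2 + 2) := by
        rw [← ex, ← ey]; exact hxy
      have := Nat.fib_add_two_strictMono.injective hxy'
      omega
    rw [Set.ncard_image_of_injOn hinj, ← Finset.coe_Icc, Set.ncard_coe_finset, Nat.card_Icc]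
    omega
  · have e : N - 2 + 1 = N - 1 := by omega
    rw [e]; exact hNmin (N - 1) (by omega)
  · have e : N - 2 + 2 = N := by omega
    rw [e]; exact hNspec

private lemma final (a c : ℕ) (ha : 0 < a) (hlo : φ ^ c < φ * a) (hup : (a : ℝ) < φ ^ (c + 1)) :
    (c : ℤ) = ⌊Real.log a / Real.log Phi⌋ ∨ (c : ℤ) = ⌈Real.log a / Real.log Phi⌉ := by
  rw [phi_eq]
  have hφ : (1 : ℝ) < φ := one_lt_goldenRatio
  have hlogφ : 0 < Real.log φ := Real.log_pos hφ
  have ha0 : (0 : ℝ) < a := by exact_mod_cast ha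
  set L := Real.log a / Real.log φ with hL
  have h1 : (c : ℝ) - 1 < L := by
    have h := Real.log_lt_log (by positivity) hlo
    rw [Real.log_pow, Real.log_mul (by positivity) (ne_of_gt ha0)] at h
    rw [hL, lt_div_iff₀ hlogφ]
    push_cast at h ⊢
    linarith
  have h2 : L < (c : ℝ) + 1 := by
    have h := Real.log_lt_log ha0 hup
    rw [Real.log_pow] at h
    rw [hL, div_lt_iff₀ hlogφ]
    push_cast at h ⊢
    linarith
  have hfl : ⌊L⌋ < (c : ℤ) + 1 := by
    rw [Int.floor_lt]
    push_cast
    exact h2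
  have hcl : (c : ℤ) - 1 < ⌈L⌉ := by
    rw [Int.lt_ceil]
    push_cast
    exact h1
  have hcf := Int.ceil_le_floor_add_one L
  omega

set_option maxHeartbeats 1000000 in
theorem fib_count_in_power_interval (a : ℕ) (ha : 2 ≤ a) (k : ℕ) :
    ((Set.range Nat.fib ∩ Set.Ico (a ^ k) (a ^ (k + 1))).ncard : ℤ)
        = ⌊Real.log a / Real.log Phi⌋ ∨
    ((Set.range Nat.fib ∩ Set.Ico (a ^ k) (a ^ (k + 1))).ncard : ℤ)
        = ⌈Real.log a / Real.log Phi⌉ := by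
  have ha0 : 0 < a := by omega
  rcases Nat.eq_zero_or_pos k with rfl | hk
  · -- k = 0
    simp only [pow_zero, zero_add, pow_one]
    obtain ⟨c, hcard, h1, h2⟩ := key0 a ha
    rw [hcard]
    apply final a c ha0
    · rcases Nat.eq_zero_or_pos c with rfl | hc
      · have h2a : (2 : ℝ) ≤ a := by exact_mod_cast ha
        have := one_lt_goldenRatio
        nlinarith
      · obtain ⟨c', rfl⟩ : ∃ c', c = c' + 1 := ⟨c - 1, by omega⟩
        have hfa : (Nat.fib (c' + 2) : ℝ) < a := by exact_mod_cast h1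
        have hp := gold_pow_le_fib c'
        have hgp : (0 : ℝ) < φ := goldenRatio_pos
        calc φ ^ (c' + 1) = φ * φ ^ c' := by ring
          _ ≤ φ * Nat.fib (c' + 2) := by nlinarith
          _ < φ * a := by nlinarith
    · have hfa : (a : ℝ) ≤ Nat.fib (c + 2) := by exact_mod_cast h2
      exact lt_of_le_of_lt hfa (fib_lt_gold_pow c)
  · -- k ≥ 1
    set A := a ^ k with hAdef
    have hA : 2 ≤ A := le_trans ha (Nat.le_self_pow (by omega) a)
    have haA : a ≤ A := Nat.le_self_pow (by omega) a
    have hB : a ^ (k + 1) = a * A := by rw [hAdef, pow_succ]; ring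
    have hAB : A ≤ a * A := by nlinarith
    rw [hB]
    obtain ⟨m, c, hm2, hcard, h1, h2, h3, h4⟩ := key A (a * A) hA hAB
    rw [hcard]
    -- real versions
    have hA0R : (0 : ℝ) < A := by exact_mod_cast (by omega : 0 < A)
    have r1 : (Nat.fib m : ℝ) + 1 ≤ A := by exact_mod_cast h1
    have r2 : (A : ℝ) ≤ Nat.fib (m + 1) := by exact_mod_cast h2
    have r3 : (Nat.fib (m + c) : ℝ) + 1 ≤ a * A := by exact_mod_cast h3
    have r4 : (a : ℝ) * A ≤ Nat.fib (m + c + 1) := by exact_mod_cast h4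
    have haAR : (a : ℝ) ≤ A := by exact_mod_cast haA
    have h2a : (2 : ℝ) ≤ a := by exact_mod_cast ha
    have hφ1 : (1 : ℝ) < φ := one_lt_goldenRatio
    have hφ0 : (0 : ℝ) < φ := goldenRatio_pos
    apply final a c ha0
    · -- lower bound : φ ^ c < φ * a
      rcases Nat.lt_or_ge c 2 with hc | hc
      · have : φ ^ c ≤ φ := by
          interval_cases c <;> simp <;> nlinarith
        nlinarith
      · obtain ⟨c', rfl⟩ : ∃ c', c = c' + 2 := ⟨c - 2, by omega⟩
        -- step A : c ≤ m + 1
        have u1 : φ ^ (m + c' ) ≤ (Nat.fib (m + (c' + 2)) : ℝ) := by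
          have := gold_pow_le_fib (m + c')
          have e : m + c' + 2 = m + (c' + 2) := by omega
          rwa [e] at this
        have u5 : (Nat.fib (m + 1) : ℝ) ≤ φ ^ m := fib_le_gold_pow m
        have u7 : φ ^ (m + c') < φ ^ m * φ ^ m := by nlinarith
        have hcm : c' + 2 ≤ m + 1 := by
          by_contra hcon
          push_neg at hcon
          have : φ ^ m * φ ^ m ≤ φ ^ (m + c') := by
            rw [← pow_add]
            exact pow_le_pow_right₀ (le_of_lt hφ1) (by omega)
          linarith
        -- step B : ψ term > -1
        have hfib9 : (0 : ℝ) ≤ (Nat.fib (c' + 1) : ℝ) := by positivity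
        have habs : |ψ ^ (m + 1) * (Nat.fib (c' + 1) : ℝ)| < 1 := by
          rw [abs_mul, abs_pow, abs_goldConj, abs_of_nonneg hfib9, inv_pow]
          have hb1 : ((φ ^ (m + 1))⁻¹ : ℝ) * Nat.fib (c' + 1) ≤ (φ ^ (m + 1))⁻¹ * φ ^ c' := by
            apply mul_le_mul_of_nonneg_left (fib_le_gold_pow c') (by positivity)
          have hb2 : φ ^ c' < φ ^ (m + 1) := pow_lt_pow_right₀ hφ1 (by omega)
          have hb3 : ((φ ^ (m + 1))⁻¹ : ℝ) * φ ^ c' < 1 := by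
            rw [inv_mul_lt_iff₀ (by positivity)]
            simpa using hb2
          linarith
        have hpsi : (-1 : ℝ) < ψ ^ (m + 1) * Nat.fib (c' + 1) := by
          have := neg_abs_le (ψ ^ (m + 1) * (Nat.fib (c' + 1) : ℝ))
          linarith
        -- combine
        have e2 : (Nat.fib ((m + 1) + (c' + 1)) : ℝ)
            = φ ^ (c' + 1) * Nat.fib (m + 1) + ψ ^ (m + 1) * Nat.fib (c' + 1) :=
          fib_split (m + 1) (c' + 1)
        have e0 : m + (c' + 2) = (m + 1) + (c' + 1) := by omega
        have r3' : φ ^ (c' + 1) * (Nat.fib (m + 1) : ℝ)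
            + ψ ^ (m + 1) * Nat.fib (c' + 1) + 1 ≤ a * A := by
          rw [← e2, ← e0]; exact r3
        have hstep : φ ^ (c' + 1) * (A : ℝ) < a * A := by
          have : φ ^ (c' + 1) * (A : ℝ) ≤ φ ^ (c' + 1) * Nat.fib (m + 1) :=
            mul_le_mul_of_nonneg_left r2 (by positivity)
          linarith
        have hfin : φ ^ (c' + 1) < (a : ℝ) := by
          have := (mul_lt_mul_iff_left₀ hA0R).mp hstep
          exact this
        have hmul : φ * φ ^ (c' + 1) < φ * a := mul_lt_mul_of_pos_left hfin hφ0
        have hps : φ ^ (c' + 2) = φ * φ ^ (c' + 1) := by rw [pow_succ, mul_comm]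
        rw [hps]
        exact hmul
    · -- upper bound : a < φ ^ (c + 1)
      have e1 : (Nat.fib (m + (c + 1)) : ℝ)
          = φ ^ (c + 1) * Nat.fib m + ψ ^ m * Nat.fib (c + 1) := fib_split m (c + 1)
      have e0 : m + c + 1 = m + (c + 1) := by omega
      have r4' : (a : ℝ) * A ≤ φ ^ (c + 1) * Nat.fib m + ψ ^ m * Nat.fib (c + 1) := by
        rw [← e1, ← e0]; exact r4
      have hfib9 : (0 : ℝ) ≤ (Nat.fib (c + 1) : ℝ) := by positivity
      have hpsi : ψ ^ m * (Nat.fib (c + 1) : ℝ) < φ ^ (c + 1) := by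
        have hb0 : ψ ^ m * (Nat.fib (c + 1) : ℝ) ≤ |ψ ^ m * (Nat.fib (c + 1) : ℝ)| :=
          le_abs_self _
        have hb1 : |ψ ^ m * (Nat.fib (c + 1) : ℝ)| ≤ (Nat.fib (c + 1) : ℝ) := by
          rw [abs_mul, abs_pow, abs_goldConj, abs_of_nonneg hfib9]
          have hinv : (φ⁻¹ : ℝ) ^ m ≤ 1 := by
            apply pow_le_one₀ (by positivity)
            exact inv_le_one_of_one_le₀ (le_of_lt hφ1)
          nlinarith
        have hb2 : (Nat.fib (c + 1) : ℝ) ≤ φ ^ c := fib_le_gold_pow c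
        have hb3 : φ ^ c < φ ^ (c + 1) := pow_lt_pow_right₀ hφ1 (by omega)
        linarith
      have hstep : (a : ℝ) * A < φ ^ (c + 1) * A := by
        have : φ ^ (c + 1) * ((Nat.fib m : ℝ) + 1) ≤ φ ^ (c + 1) * A :=
          mul_le_mul_of_nonneg_left r1 (by positivity)
        nlinarith
      exact (mul_lt_mul_iff_left₀ hA0R).mp hstep
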